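/- Let n be a natural number, t, θ₀, θ₁, g ∈ ℂ, let q, p : Fin n → ℂ with p injective, let Λ = diag(p_1,…,p_n), and let Φ be the n×n complex matrix with Φ i i = q i and Φ i j = i·g/(p i − p j) for i ≠ j (i the imaginary unit). Then trace(Λ·Φ·(Λ − Φ − t·1) + θ₀·Λ − (θ₀+θ₁)·Φ) = Σ_i [q_i p_i² − p_i q_i² − t q_i p_i + θ₀ p_i − (θ₀+θ₁) q_i] − g² Σ_{i<j} (p_i + p_j)/(p_i − p_j)². -/

import Mathlib

lemma sum_ne_symm' {n : ℕ} (f : Fin n → Fin n → ℂ) :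
    ∑ i, ∑ j, (if i ≠ j then f i j else 0)
      = ∑ i, ∑ j, (if i < j then f i j + f j i else 0) := by
  have h1 : ∀ i j : Fin n, (if i ≠ j then f i j else 0)
      = (if i < j then f i j else 0) + (if j < i then f i j else 0) := by
    intro i j
    rcases lt_trichotomy i j with h|h|h
    · simp [h, h.ne, not_lt.mpr h.le]
    · simp [h]
    · simp [h, h.ne', not_lt.mpr h.le]
  simp only [h1, Finset.sum_add_distrib]
  rw [Finset.sum_comm (f := fun i j => if j < i then f i j else 0)]
  rw [← Finset.sum_add_distrib]
  congr 1; ext i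
  rw [← Finset.sum_add_distrib]
  congr 1; ext j
  split <;> simp

/-- Computation of the dual Calogero–Painlevé IV Hamiltonian: for `Λ = diag(p)` and `Φ`
with diagonal entries `q i` and off-diagonal entries `I·g/(p i − p j)`,
`Tr(ΛΦ(Λ − Φ − t·1) + θ₀Λ − (θ₀+θ₁)Φ)` equals the multi-particle Hamiltonian
with interaction `− g² Σ_{i<j} (pᵢ+pⱼ)/(pᵢ−pⱼ)²`. -/
theorem dual_calogero_painleveIV_hamiltonian (n : ℕ) (t θ₀ θ₁ g : ℂ)
    (q p : Fin n → ℂ) (hp : Function.Injective p) :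
    Matrix.trace
        (Matrix.diagonal p *
            (Matrix.of fun i j : Fin n =>
              if i = j then q i else Complex.I * g / (p i - p j)) *
            (Matrix.diagonal p
              - (Matrix.of fun i j : Fin n =>
                  if i = j then q i else Complex.I * g / (p i - p j))
              - t • (1 : Matrix (Fin n) (Fin n) ℂ))
          + θ₀ • Matrix.diagonal p
          - (θ₀ + θ₁) • (Matrix.of fun i j : Fin n =>
              if i = j then q i else Complex.I * g / (p i - p j)))
      = (∑ i, (q i * (p i) ^ 2 - p i * (q i) ^ 2 - t * q i * p i
            + θ₀ * p i - (θ₀ + θ₁) * q i))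
        - g ^ 2 * ∑ i, ∑ j, if i < j then (p i + p j) / (p i - p j) ^ 2 else 0 := by
  set Φ : Matrix (Fin n) (Fin n) ℂ :=
    Matrix.of fun i j : Fin n => if i = j then q i else Complex.I * g / (p i - p j) with hΦ
  have hA : Matrix.diagonal p * Φ = Matrix.of (fun i j => p i * Φ i j) := by
    ext i j; simp [Matrix.diagonal_mul]
  rw [hA]
  simp only [Matrix.trace, Matrix.diag_apply, Matrix.add_apply, Matrix.sub_apply,
    Matrix.smul_apply, Matrix.mul_apply, Matrix.diagonal_apply, Matrix.one_apply,
    Matrix.of_apply, smul_eq_mul, mul_ite, mul_zero, mul_one,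
    Finset.sum_ite_eq, Finset.mem_univ, if_true]
  have key : ∀ x x₁ : Fin n,
      p x * Φ x x₁ * ((if x₁ = x then p x₁ else 0) - Φ x₁ x - if x₁ = x then t else 0)
      = (if x₁ = x then q x * p x ^ 2 - p x * q x ^ 2 - t * q x * p x else 0)
        + (if x ≠ x₁ then -(g ^ 2 * (p x / (p x - p x₁) ^ 2)) else 0) := by
    intro x x₁
    by_cases h : x₁ = x
    · subst h; simp [hΦ]; ring
    · have hd : p x - p x₁ ≠ 0 := sub_ne_zero.mpr fun hh => h (hp hh).symm
      have hd' : p x₁ - p x ≠ 0 := sub_ne_zero.mpr fun hh => h (hp hh)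
      simp only [hΦ, Matrix.of_apply, if_neg h, if_neg (Ne.symm h)]
      rw [if_pos (Ne.symm h)]
      field_simp
      ring_nf
      simp [Complex.I_sq]
  simp only [key, Finset.sum_add_distrib, Finset.sum_sub_distrib,
    Finset.sum_ite_eq, Finset.sum_ite_eq', Finset.mem_univ, if_true]
  rw [sum_ne_symm' (f := fun i j => -(g ^ 2 * (p i / (p i - p j) ^ 2)))]
  have key2 : ∀ i j : Fin n,
      (if i < j then -(g ^ 2 * (p i / (p i - p j) ^ 2)) + -(g ^ 2 * (p j / (p j - p i) ^ 2)) else 0)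
      = -g ^ 2 * (if i < j then (p i + p j) / (p i - p j) ^ 2 else 0) := by
    intro i j
    split
    · next h =>
      have hd : p i - p j ≠ 0 := sub_ne_zero.mpr fun hh => h.ne (hp hh)
      have hd' : p j - p i ≠ 0 := sub_ne_zero.mpr fun hh => h.ne (hp hh.symm)
      field_simp
      ring
    · simp
  simp only [key2, ← Finset.mul_sum]
  simp only [hΦ, Matrix.of_apply, eq_self_iff_true, if_true]
  ring
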